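/- Let n ≥ 1 and let K be a field in which j! is invertible for every j ≤ n (for example a field of characteristic 0, or of characteristic p > n). Then the quotient algebra K[t_1,…,t_n] / ( t_1·t_i − (i+1)·t_{i+1} for 1 ≤ i ≤ n−1, t_1·t_n ) is isomorphic as a K-algebra to the truncated polynomial algebra K[u]/(u^{n+1}), via an isomorphism sending the class of t_1 to the class of u (and the class of t_j to u^j/j!). -/

import Mathlib

open MvPolynomial

namespace UnknotAux14

variable (m : ℕ) (K : Type*) [Field K]

noncomputable def I : Ideal (MvPolynomial (Fin (m + 1)) K) :=
  Ideal.span (Set.range (fun i : Fin m =>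
      (X (0 : Fin (m + 1)) * X i.castSucc - ((i : ℕ) + 2) • X i.succ :
        MvPolynomial (Fin (m + 1)) K)) ∪
    {X (0 : Fin (m + 1)) * X (Fin.last m)})

noncomputable def J : Ideal (Polynomial K) :=
  Ideal.span {(Polynomial.X : Polynomial K) ^ (m + 2)}

lemma mem1 (i : Fin m) :
    (X (0 : Fin (m + 1)) * X i.castSucc - ((i : ℕ) + 2) • X i.succ :
      MvPolynomial (Fin (m + 1)) K) ∈ I m K :=
  Ideal.subset_span (Or.inl ⟨i, rfl⟩)

lemma mem2 : (X (0 : Fin (m + 1)) * X (Fin.last m) : MvPolynomial (Fin (m + 1)) K) ∈ I m K :=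
  Ideal.subset_span (Or.inr rfl)

lemma rel (i : Fin m) :
    Ideal.Quotient.mk (I m K) (X (0 : Fin (m + 1)) * X i.castSucc) =
      Ideal.Quotient.mk (I m K) (C (((i : ℕ) + 2 : ℕ) : K) * X i.succ) := by
  rw [Ideal.Quotient.eq]
  have h : (C (((i : ℕ) + 2 : ℕ) : K) * X i.succ : MvPolynomial (Fin (m + 1)) K)
      = ((i : ℕ) + 2) • X i.succ := by
    rw [nsmul_eq_mul, map_natCast (C : K →+* MvPolynomial (Fin (m + 1)) K)]
  rw [h]
  exact mem1 m K i

lemma keypow (j : ℕ) (h : j < m + 1) :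
    Ideal.Quotient.mk (I m K) ((X (0 : Fin (m + 1)) : MvPolynomial (Fin (m + 1)) K) ^ (j + 1)) =
      Ideal.Quotient.mk (I m K) (C (((j + 1).factorial : K)) * X ⟨j, h⟩) := by
  induction j with
  | zero => simp
  | succ j ih =>
    have hj : j < m + 1 := Nat.lt_of_succ_lt h
    have hjm : j < m := Nat.succ_lt_succ_iff.mp h
    have hi : (⟨j, hjm⟩ : Fin m).castSucc = ⟨j, hj⟩ := rfl
    have hisucc : (⟨j, hjm⟩ : Fin m).succ = ⟨j + 1, h⟩ := rfl
    calc Ideal.Quotient.mk (I m K) ((X (0 : Fin (m + 1)) : MvPolynomial (Fin (m + 1)) K) ^ (j + 2))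
        = Ideal.Quotient.mk (I m K) ((X 0 : MvPolynomial (Fin (m + 1)) K) ^ (j + 1)) *
            Ideal.Quotient.mk (I m K) (X 0) := by rw [← map_mul, ← pow_succ]
      _ = Ideal.Quotient.mk (I m K) (C (((j + 1).factorial : K)) * X ⟨j, hj⟩) *
            Ideal.Quotient.mk (I m K) (X 0) := by rw [ih hj]
      _ = Ideal.Quotient.mk (I m K) (C (((j + 1).factorial : K))) *
            Ideal.Quotient.mk (I m K) (X 0 * X ⟨j, hj⟩) := by
            rw [← map_mul, ← map_mul]; ring_nf
      _ = Ideal.Quotient.mk (I m K) (C (((j + 1).factorial : K))) *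
            Ideal.Quotient.mk (I m K) (C ((j + 2 : ℕ) : K) * X ⟨j + 1, h⟩) := by
            have := rel m K ⟨j, hjm⟩
            rw [hi, hisucc] at this
            rw [this]
      _ = Ideal.Quotient.mk (I m K) (C (((j + 2).factorial : K)) * X ⟨j + 1, h⟩) := by
            rw [← map_mul, ← mul_assoc, ← map_mul]
            congr 3
            push_cast [Nat.factorial_succ]
            ring

lemma keyzero :
    Ideal.Quotient.mk (I m K) ((X (0 : Fin (m + 1)) : MvPolynomial (Fin (m + 1)) K) ^ (m + 2)) =
      0 := by
  have : Ideal.Quotient.mk (I m K)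
      ((X (0 : Fin (m + 1)) : MvPolynomial (Fin (m + 1)) K) ^ (m + 2)) =
      Ideal.Quotient.mk (I m K) (C (((m + 1).factorial : K))) *
        Ideal.Quotient.mk (I m K) (X 0 * X (Fin.last m)) := by
    calc Ideal.Quotient.mk (I m K) ((X (0 : Fin (m + 1)) : MvPolynomial (Fin (m + 1)) K) ^ (m + 2))
        = Ideal.Quotient.mk (I m K) ((X 0 : MvPolynomial (Fin (m + 1)) K) ^ (m + 1)) *
            Ideal.Quotient.mk (I m K) (X 0) := by rw [← map_mul, ← pow_succ]
      _ = Ideal.Quotient.mk (I m K) (C (((m + 1).factorial : K)) * X (Fin.last m)) *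
            Ideal.Quotient.mk (I m K) (X 0) := by
              rw [keypow m K m (Nat.lt_succ_self m)]; rfl
      _ = _ := by rw [← map_mul, ← map_mul]; ring_nf
  rw [this, Ideal.Quotient.eq_zero_iff_mem.mpr (mem2 m K), mul_zero]

end UnknotAux14

open UnknotAux14 in
theorem unknot_quotient_invertible_factorials (m : ℕ) (K : Type*) [Field K]
    (hfac : ∀ j : ℕ, j ≤ m + 1 → IsUnit ((j.factorial : K))) :
    ∃ e : (MvPolynomial (Fin (m + 1)) K ⧸
            Ideal.span (Set.range (fun i : Fin m =>
                (X (0 : Fin (m + 1)) * X i.castSucc - ((i : ℕ) + 2) • X i.succ :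
                  MvPolynomial (Fin (m + 1)) K)) ∪
              {X (0 : Fin (m + 1)) * X (Fin.last m)})) ≃ₐ[K]
          (Polynomial K ⧸ Ideal.span {(Polynomial.X : Polynomial K) ^ (m + 2)}),
      e (Ideal.Quotient.mk _ (X (0 : Fin (m + 1)))) =
          Ideal.Quotient.mk _ (Polynomial.X : Polynomial K) ∧
      ∀ j : Fin (m + 1),
        e (Ideal.Quotient.mk _ (X j)) =
          Ideal.Quotient.mk _
            (Polynomial.C ((((j : ℕ) + 1).factorial : K))⁻¹ *
              (Polynomial.X : Polynomial K) ^ ((j : ℕ) + 1)) := by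
  have hne : ∀ j : ℕ, j ≤ m + 1 → ((j.factorial : K)) ≠ 0 := fun j hj => (hfac j hj).ne_zero
  set φ0 : MvPolynomial (Fin (m + 1)) K →ₐ[K] (Polynomial K ⧸ J m K) :=
    MvPolynomial.aeval (fun j : Fin (m + 1) =>
      Ideal.Quotient.mk (J m K)
        (Polynomial.C ((((j : ℕ) + 1).factorial : K))⁻¹ *
          (Polynomial.X : Polynomial K) ^ ((j : ℕ) + 1))) with hφ0
  have hXJ : Ideal.Quotient.mk (J m K) ((Polynomial.X : Polynomial K) ^ (m + 2)) = 0 :=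
    Ideal.Quotient.eq_zero_iff_mem.mpr (Ideal.subset_span rfl)
  have hcoef : ∀ i : Fin m, ((((i : ℕ) + 1).factorial : K))⁻¹ =
      (((i : ℕ) + 2 : ℕ) : K) * ((((i : ℕ) + 2).factorial : K))⁻¹ := by
    intro i
    have h1 : ((((i : ℕ) + 1).factorial : K)) ≠ 0 := hne _ (by omega)
    have h2 : ((((i : ℕ) + 2).factorial : K)) ≠ 0 := hne _ (by omega)
    field_simp
    push_cast [Nat.factorial_succ ((i : ℕ) + 1)]
    ring
  have hker : ∀ a ∈ I m K, φ0 a = 0 := by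
    have hle : I m K ≤ RingHom.ker φ0 := by
      rw [I, Ideal.span_le]
      rintro p (⟨i, rfl⟩ | rfl)
      · simp only [SetLike.mem_coe, RingHom.mem_ker, map_sub, map_mul, map_nsmul, hφ0, aeval_X,
          Fin.coe_castSucc, Fin.val_succ, Fin.val_zero]
        rw [nsmul_eq_mul, ← map_natCast (Ideal.Quotient.mk (J m K))]
        simp only [← map_mul, ← map_sub]
        convert map_zero (Ideal.Quotient.mk (J m K)) using 2
        rw [hcoef i]
        simp only [show ((0:ℕ)+1) = 1 from rfl, Nat.factorial_one, Nat.cast_one, inv_one,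
          map_one, one_mul, map_mul, Polynomial.C_eq_natCast]
        ring
      · simp only [SetLike.mem_coe, RingHom.mem_ker, map_mul, hφ0, aeval_X, Fin.val_zero,
          Fin.val_last]
        simp only [← map_mul]
        refine Ideal.Quotient.eq_zero_iff_mem.mpr (Ideal.mem_span_singleton'.mpr
          ⟨Polynomial.C (((0:ℕ) + 1).factorial : K)⁻¹ *
            Polynomial.C (((m:ℕ) + 1).factorial : K)⁻¹, ?_⟩)
        ring
    intro a ha
    exact RingHom.mem_ker.mp (hle ha)
  set φ : (MvPolynomial (Fin (m + 1)) K ⧸ I m K) →ₐ[K] (Polynomial K ⧸ J m K) :=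
    Ideal.Quotient.liftₐ (I m K) φ0 hker with hφ
  set ψ0 : Polynomial K →ₐ[K] (MvPolynomial (Fin (m + 1)) K ⧸ I m K) :=
    Polynomial.aeval (Ideal.Quotient.mk (I m K) (X (0 : Fin (m + 1)))) with hψ0
  have hker' : ∀ a ∈ J m K, ψ0 a = 0 := by
    have hle : J m K ≤ RingHom.ker ψ0 := by
      rw [J, Ideal.span_le]
      rintro p rfl
      simp only [SetLike.mem_coe, RingHom.mem_ker, map_pow, hψ0, Polynomial.aeval_X]
      rw [← map_pow]
      exact keyzero m K
    intro a ha
    exact RingHom.mem_ker.mp (hle ha)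
  set ψ : (Polynomial K ⧸ J m K) →ₐ[K] (MvPolynomial (Fin (m + 1)) K ⧸ I m K) :=
    Ideal.Quotient.liftₐ (J m K) ψ0 hker' with hψ
  have hφX : ∀ j : Fin (m + 1), φ (Ideal.Quotient.mk (I m K) (X j)) =
      Ideal.Quotient.mk (J m K)
        (Polynomial.C ((((j : ℕ) + 1).factorial : K))⁻¹ *
          (Polynomial.X : Polynomial K) ^ ((j : ℕ) + 1)) := by
    intro j
    show φ0 (X j) = _
    simp [hφ0]
  have hψX : ψ (Ideal.Quotient.mk (J m K) Polynomial.X) =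
      Ideal.Quotient.mk (I m K) (X (0 : Fin (m + 1))) := by
    show ψ0 Polynomial.X = _
    simp [hψ0]
  have hψC : ∀ c : K, ψ (Ideal.Quotient.mk (J m K) (Polynomial.C c)) =
      Ideal.Quotient.mk (I m K) (C c) := by
    intro c
    show ψ0 (Polynomial.C c) = _
    simp only [hψ0, Polynomial.aeval_C]
    rfl
  have hφX0 : φ (Ideal.Quotient.mk (I m K) (X (0 : Fin (m + 1)))) =
      Ideal.Quotient.mk (J m K) (Polynomial.X : Polynomial K) := by
    have := hφX 0
    simp only [Fin.val_zero] at this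
    rw [this]
    norm_num [Nat.factorial]
  have comp1 : φ.comp ψ = AlgHom.id K _ := by
    have key : (φ.comp ψ).comp (Ideal.Quotient.mkₐ K (J m K)) =
        (AlgHom.id K _).comp (Ideal.Quotient.mkₐ K (J m K)) := by
      apply Polynomial.algHom_ext
      simp only [AlgHom.comp_apply, Ideal.Quotient.mkₐ_eq_mk, AlgHom.id_apply]
      rw [hψX, hφX0]
    exact AlgHom.ext fun q => Quotient.inductionOn' q fun p =>
      congrFun (congrArg DFunLike.coe key) p
  have comp2 : ψ.comp φ = AlgHom.id K _ := by
    have key : (ψ.comp φ).comp (Ideal.Quotient.mkₐ K (I m K)) =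
        (AlgHom.id K _).comp (Ideal.Quotient.mkₐ K (I m K)) := by
      apply MvPolynomial.algHom_ext
      intro j
      simp only [AlgHom.comp_apply, Ideal.Quotient.mkₐ_eq_mk, AlgHom.id_apply]
      rw [hφX j, map_mul (Ideal.Quotient.mk (J m K)), map_pow (Ideal.Quotient.mk (J m K)),
        map_mul ψ, map_pow ψ, hψX, hψC, ← map_pow, keypow m K (j : ℕ) j.isLt, ← map_mul,
        ← mul_assoc, ← C_mul, inv_mul_cancel₀ (hne _ (by omega)), C_1, one_mul]
    exact AlgHom.ext fun q => Quotient.inductionOn' q fun p =>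
      congrFun (congrArg DFunLike.coe key) p
  refine ⟨AlgEquiv.ofAlgHom φ ψ comp1 comp2, hφX0, fun j => hφX j⟩
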